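/- (Unbiasedness of CDR.) Given any reward model q̂_r : 𝒳 → 𝒜 → ℝ, define the single-sample CDR value f_CDR(x,A,ω) := ∑_{a∈𝒜} [ w(x,a)·( C(ω,a)·R(ω,a) − p_c(x,a,A)·q̂_r(x,a) ) + p_c(x,a,π)·q̂_r(x,a) ], where w(x,a) := p_c(x,a,π)/p_c(x,a,π₀) with the convention t/0 := 0. Under the independence of potential rewards condition, the click–reward factorization condition, and the click-wise common support condition, CDR is unbiased regardless of the reward model: E_{x∼p, A∼π₀(x), ω∼κ(x,A)}[f_CDR(x,A,ω)] = V(π). -/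
import Mathlib

open scoped BigOperators Classical

/-- Expectation of a real-valued function under a PMF on a finite type. -/
noncomputable def pexp {X : Type*} [Fintype X] (p : PMF X) (f : X → ℝ) : ℝ :=
  ∑ x, (p x).toReal * f x

/-- Variance of a real-valued function under a PMF on a finite type. -/
noncomputable def pvar {X : Type*} [Fintype X] (p : PMF X) (f : X → ℝ) : ℝ :=
  pexp p (fun x => (f x - pexp p f) ^ 2)

/-- Joint distribution of one logged sample (x, A, ω) with x ∼ p, A ∼ π₀(x), ω ∼ κ(x,A). -/
noncomputable def logged {𝒳 ℛ Ω : Type*} (p : PMF 𝒳) (π₀ : 𝒳 → PMF ℛ)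
    (κ : 𝒳 → ℛ → PMF Ω) : PMF (𝒳 × ℛ × Ω) :=
  p.bind fun x => (π₀ x).bind fun A => (κ x A).map fun ω => (x, A, ω)

/-- Click probability of action a at context x given ranking A: p_c(x,a,A). -/
noncomputable def pcA {𝒳 ℛ Ω 𝒜 : Type*} [Fintype Ω]
    (κ : 𝒳 → ℛ → PMF Ω) (C : Ω → 𝒜 → ℝ) (x : 𝒳) (a : 𝒜) (A : ℛ) : ℝ :=
  pexp (κ x A) fun ω => C ω a

/-- Marginalized click probability of action a at context x under policy μ: p_c(x,a,μ). -/
noncomputable def pcPol {𝒳 ℛ Ω 𝒜 : Type*} [Fintype Ω] [Fintype ℛ]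
    (κ : 𝒳 → ℛ → PMF Ω) (C : Ω → 𝒜 → ℝ) (μ : 𝒳 → PMF ℛ) (x : 𝒳) (a : 𝒜) : ℝ :=
  pexp (μ x) fun A => pcA κ C x a A

/-- Policy value V(π). -/
noncomputable def polValue {𝒳 ℛ Ω 𝒜 : Type*} [Fintype 𝒳] [Fintype ℛ] [Fintype Ω] [Fintype 𝒜]
    (p : PMF 𝒳) (π : 𝒳 → PMF ℛ) (κ : 𝒳 → ℛ → PMF Ω) (C R : Ω → 𝒜 → ℝ) : ℝ :=
  pexp p fun x => pexp (π x) fun A => pexp (κ x A) fun ω => ∑ a, C ω a * R ω a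

lemma pexp_congr {X : Type*} [Fintype X] (p : PMF X) {f g : X → ℝ}
    (h : ∀ x, f x = g x) : pexp p f = pexp p g := by
  unfold pexp; exact Finset.sum_congr rfl fun x _ => by rw [h x]

lemma pexp_const {X : Type*} [Fintype X] (p : PMF X) (c : ℝ) :
    pexp p (fun _ => c) = c := by
  unfold pexp
  rw [← Finset.sum_mul]
  have : (∑ x : X, (p x).toReal) = 1 := by
    have h := p.tsum_coe
    rw [tsum_fintype] at h
    have := congrArg ENNReal.toReal h
    rw [ENNReal.toReal_sum (fun x _ => (p.apply_ne_top x))] at this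
    simpa using this
  rw [this, one_mul]

lemma pexp_add {X : Type*} [Fintype X] (p : PMF X) (f g : X → ℝ) :
    pexp p (fun x => f x + g x) = pexp p f + pexp p g := by
  unfold pexp; rw [← Finset.sum_add_distrib]
  exact Finset.sum_congr rfl fun x _ => by ring

lemma pexp_smul {X : Type*} [Fintype X] (p : PMF X) (c : ℝ) (f : X → ℝ) :
    pexp p (fun x => c * f x) = c * pexp p f := by
  unfold pexp; rw [Finset.mul_sum]
  exact Finset.sum_congr rfl fun x _ => by ring

lemma pexp_sum {X I : Type*} [Fintype X] [Fintype I] (p : PMF X) (f : I → X → ℝ) :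
    pexp p (fun x => ∑ i, f i x) = ∑ i, pexp p (f i) := by
  unfold pexp
  rw [Finset.sum_comm]
  exact Finset.sum_congr rfl fun x _ => by rw [Finset.mul_sum]

lemma pexp_bind {X Y : Type*} [Fintype X] [Fintype Y] (p : PMF X) (f : X → PMF Y) (g : Y → ℝ) :
    pexp (p.bind f) g = pexp p (fun x => pexp (f x) g) := by
  unfold pexp
  have h : ∀ y, ((p.bind f) y).toReal = ∑ x, (p x).toReal * (f x y).toReal := by
    intro y
    rw [PMF.bind_apply, tsum_fintype,
      ENNReal.toReal_sum (fun x _ => ENNReal.mul_ne_top (p.apply_ne_top x) ((f x).apply_ne_top y))]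
    exact Finset.sum_congr rfl fun x _ => ENNReal.toReal_mul
  simp only [h, Finset.sum_mul]
  rw [Finset.sum_comm]
  exact Finset.sum_congr rfl fun x _ => by rw [Finset.mul_sum]; exact Finset.sum_congr rfl fun y _ => by ring

lemma pexp_map {X Y : Type*} [Fintype X] [Fintype Y] (p : PMF X) (g : X → Y) (f : Y → ℝ) :
    pexp (p.map g) f = pexp p (fun x => f (g x)) := by
  rw [PMF.map, pexp_bind]
  apply pexp_congr
  intro x
  unfold pexp
  simp [PMF.pure_apply, apply_ite ENNReal.toReal, ite_mul, Finset.sum_ite_eq]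

/-- Unbiasedness of CDR, regardless of the reward model. -/
theorem CDR_unbiased {𝒳 ℛ Ω 𝒜 : Type*}
    [Fintype 𝒳] [Nonempty 𝒳] [Fintype ℛ] [Nonempty ℛ] [Fintype Ω] [Nonempty Ω] [Fintype 𝒜]
    (p : PMF 𝒳) (π π₀ : 𝒳 → PMF ℛ) (κ : 𝒳 → ℛ → PMF Ω)
    (C R : Ω → 𝒜 → ℝ) (hC : ∀ ω a, C ω a = 0 ∨ C ω a = 1)
    (q_r : 𝒳 → 𝒜 → ℝ)
    (hind : ∀ x a A, pexp (κ x A) (fun ω => R ω a) = q_r x a)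
    (hfact : ∀ x a A,
      pexp (κ x A) (fun ω => C ω a * R ω a) = pcA κ C x a A * q_r x a)
    (hsupp : ∀ x a, 0 < pcPol κ C π x a → 0 < pcPol κ C π₀ x a)
    (qhat : 𝒳 → 𝒜 → ℝ) :
    pexp (logged p π₀ κ)
        (fun s => ∑ a,
          ((pcPol κ C π s.1 a / pcPol κ C π₀ s.1 a) *
              (C s.2.2 a * R s.2.2 a - pcA κ C s.1 a s.2.1 * qhat s.1 a)
            + pcPol κ C π s.1 a * qhat s.1 a))
    = polValue p π κ C R := by
  have hpcA : ∀ x a A, 0 ≤ pcA κ C x a A := by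
    intro x a A
    unfold pcA pexp
    apply Finset.sum_nonneg
    intro ω _
    apply mul_nonneg ENNReal.toReal_nonneg
    rcases hC ω a with h | h <;> simp [h]
  have hpcP : ∀ (μ : 𝒳 → PMF ℛ) x a, 0 ≤ pcPol κ C μ x a := by
    intro μ x a
    unfold pcPol pexp
    exact Finset.sum_nonneg fun A _ => mul_nonneg ENNReal.toReal_nonneg (hpcA x a A)
  -- per (x, a, A): expectation over ω
  have stepω : ∀ x a A,
      pexp (κ x A) (fun ω =>
        (pcPol κ C π x a / pcPol κ C π₀ x a) *
            (C ω a * R ω a - pcA κ C x a A * qhat x a)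
          + pcPol κ C π x a * qhat x a)
      = (pcPol κ C π x a / pcPol κ C π₀ x a) * (q_r x a - qhat x a) * pcA κ C x a A
          + pcPol κ C π x a * qhat x a := by
    intro x a A
    set w := pcPol κ C π x a / pcPol κ C π₀ x a with hw
    have h1 : pexp (κ x A) (fun ω =>
        w * (C ω a * R ω a - pcA κ C x a A * qhat x a) + pcPol κ C π x a * qhat x a)
        = w * (pexp (κ x A) (fun ω => C ω a * R ω a) - pcA κ C x a A * qhat x a)
          + pcPol κ C π x a * qhat x a := by
      have := pexp_congr (κ x A) (f := fun ω =>
          w * (C ω a * R ω a - pcA κ C x a A * qhat x a) + pcPol κ C π x a * qhat x a)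
        (g := fun ω => w * (C ω a * R ω a) +
          (pcPol κ C π x a * qhat x a - w * (pcA κ C x a A * qhat x a)))
        (fun ω => by ring)
      rw [this, pexp_add, pexp_smul, pexp_const]
      ring
    rw [h1, hfact]
    ring
  -- per (x, a): expectation over A
  have stepA : ∀ x a,
      pexp (π₀ x) (fun A =>
        (pcPol κ C π x a / pcPol κ C π₀ x a) * (q_r x a - qhat x a) * pcA κ C x a A
          + pcPol κ C π x a * qhat x a)
      = pcPol κ C π x a * q_r x a := by
    intro x a
    have h1 : pexp (π₀ x) (fun A =>
        (pcPol κ C π x a / pcPol κ C π₀ x a) * (q_r x a - qhat x a) * pcA κ C x a A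
          + pcPol κ C π x a * qhat x a)
        = (pcPol κ C π x a / pcPol κ C π₀ x a) * (q_r x a - qhat x a) * pcPol κ C π₀ x a
          + pcPol κ C π x a * qhat x a := by
      rw [pexp_add, pexp_smul, pexp_const]
      rfl
    rw [h1]
    by_cases h0 : pcPol κ C π₀ x a = 0
    · have hπ : pcPol κ C π x a = 0 := by
        rcases (hpcP π x a).eq_or_lt with h | h
        · exact h.symm
        · exact absurd (hsupp x a h) (by simp [h0])
      simp [h0, hπ]
    · field_simp
      ring
  -- expectation over the logged distribution factorizes
  unfold logged
  rw [pexp_bind]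
  have lhs_eq : ∀ x,
      pexp (π₀ x) (fun A => pexp ((κ x A).map fun ω => (x, A, ω)) (fun s => ∑ a,
          ((pcPol κ C π s.1 a / pcPol κ C π₀ s.1 a) *
              (C s.2.2 a * R s.2.2 a - pcA κ C s.1 a s.2.1 * qhat s.1 a)
            + pcPol κ C π s.1 a * qhat s.1 a)))
      = ∑ a, pcPol κ C π x a * q_r x a := by
    intro x
    have hA : ∀ A, pexp ((κ x A).map fun ω => (x, A, ω)) (fun s => ∑ a,
          ((pcPol κ C π s.1 a / pcPol κ C π₀ s.1 a) *
              (C s.2.2 a * R s.2.2 a - pcA κ C s.1 a s.2.1 * qhat s.1 a)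
            + pcPol κ C π s.1 a * qhat s.1 a))
        = ∑ a, ((pcPol κ C π x a / pcPol κ C π₀ x a) * (q_r x a - qhat x a) * pcA κ C x a A
            + pcPol κ C π x a * qhat x a) := by
      intro A
      rw [pexp_map]
      rw [pexp_sum (f := fun a ω =>
        (pcPol κ C π x a / pcPol κ C π₀ x a) *
              (C ω a * R ω a - pcA κ C x a A * qhat x a)
            + pcPol κ C π x a * qhat x a)]
      exact Finset.sum_congr rfl fun a _ => stepω x a A
    rw [pexp_congr (π₀ x) hA]
    rw [pexp_sum (f := fun a A =>
      (pcPol κ C π x a / pcPol κ C π₀ x a) * (q_r x a - qhat x a) * pcA κ C x a A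
        + pcPol κ C π x a * qhat x a)]
    exact Finset.sum_congr rfl fun a _ => stepA x a
  rw [pexp_congr p (fun x => (pexp_bind (π₀ x) _ _).trans (lhs_eq x))]
  -- now the right-hand side
  unfold polValue
  apply pexp_congr
  intro x
  symm
  have hA : ∀ A, pexp (κ x A) (fun ω => ∑ a, C ω a * R ω a)
      = ∑ a, pcA κ C x a A * q_r x a := by
    intro A
    rw [pexp_sum (f := fun a ω => C ω a * R ω a)]
    exact Finset.sum_congr rfl fun a _ => hfact x a A
  rw [pexp_congr (π x) hA]
  rw [pexp_sum (f := fun a A => pcA κ C x a A * q_r x a)]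
  refine Finset.sum_congr rfl fun a _ => ?_
  have : pexp (π x) (fun A => pcA κ C x a A * q_r x a)
      = pexp (π x) (fun A => q_r x a * pcA κ C x a A) := pexp_congr _ fun A => by ring
  rw [this, pexp_smul]
  unfold pcPol
  ring
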